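/- For every positive integer k, o(⌈k/2⌉ + 1) − ⌊k/6⌋ ≥ o(⌈k/8⌉ + 1). -/

import Mathlib

noncomputable def ell (g : ℕ) : ℕ :=
  sInf {k | ∃ a n : Fin k → ℕ, (∀ i, a i = 1 ∨ a i = 3) ∧ g = ∑ i, a i * 2 ^ n i}

noncomputable def obj (g : ℕ) : ℕ := g - ell g

lemma ell_le_of_rep {g k : ℕ} (a n : Fin k → ℕ) (h1 : ∀ i, a i = 1 ∨ a i = 3)
    (h2 : g = ∑ i, a i * 2 ^ n i) : ell g ≤ k :=
  Nat.sInf_le ⟨a, n, h1, h2⟩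

lemma rep_nonempty (g : ℕ) :
    {k | ∃ a n : Fin k → ℕ, (∀ i, a i = 1 ∨ a i = 3) ∧ g = ∑ i, a i * 2 ^ n i}.Nonempty := by
  refine ⟨g, fun _ => 1, fun _ => 0, fun _ => Or.inl rfl, ?_⟩
  simp

lemma ell_pos {g : ℕ} (hg : 0 < g) : 1 ≤ ell g := by
  rw [Nat.one_le_iff_ne_zero]
  intro h
  rcases (Nat.sInf_eq_zero.mp h) with h0 | hemp
  · obtain ⟨a, n, _, h2⟩ := h0
    simp at h2
    omega
  · exact absurd hemp (Set.nonempty_iff_ne_empty.mp (rep_nonempty g))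

lemma ell_double {g : ℕ} : ell (2 * g) ≤ ell g := by
  obtain ⟨a, n, h1, h2⟩ := Nat.sInf_mem (rep_nonempty g)
  refine ell_le_of_rep a (fun i => n i + 1) h1 ?_
  calc 2 * g = 2 * ∑ i, a i * 2 ^ n i := by rw [← h2]
    _ = ∑ i, a i * 2 ^ (n i + 1) := by
        rw [Finset.mul_sum]; exact Finset.sum_congr rfl fun i _ => by ring

lemma ell_odd {g : ℕ} : ell (2 * g + 1) ≤ ell g + 1 := by
  obtain ⟨a, n, h1, h2⟩ : ∃ a n : Fin (ell g) → ℕ, (∀ i, a i = 1 ∨ a i = 3) ∧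
      g = ∑ i, a i * 2 ^ n i := Nat.sInf_mem (rep_nonempty g)
  refine ell_le_of_rep (Fin.snoc (α := fun _ => ℕ) a 1) (Fin.snoc (α := fun _ => ℕ) (fun i => n i + 1) 0) ?_ ?_
  · intro i
    induction i using Fin.lastCases with
    | last => simp
    | cast i => simpa using h1 i
  · rw [Fin.sum_univ_castSucc]
    simp only [Fin.snoc_castSucc, Fin.snoc_last]
    have key : 2 * g + 1 = (∑ i, a i * 2 ^ (n i + 1)) + 1 * 2 ^ 0 := by
      have hs : ∑ i, a i * 2 ^ (n i + 1) = 2 * ∑ i, a i * 2 ^ n i := by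
        rw [Finset.mul_sum]; exact Finset.sum_congr rfl fun i _ => by ring
      rw [hs, ← h2]; norm_num
    exact key

lemma ell_le_log : ∀ g : ℕ, 0 < g → ell g ≤ Nat.log 2 g + 1 := by
  intro g
  induction g using Nat.strong_induction_on with
  | _ g ih =>
    intro hg
    rcases Nat.lt_or_ge g 2 with h2 | h2
    · -- g = 1
      interval_cases g
      have : ell 1 ≤ 1 := ell_le_of_rep (k := 1) (fun _ => 1) (fun _ => 0)
        (fun _ => Or.inl rfl) (by simp)
      omega
    rcases Nat.even_or_odd g with ⟨m, hm⟩ | ⟨m, hm⟩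
    · have hm1 : 0 < m := by omega
      have := ih m (by omega) hm1
      have hd : ell g ≤ ell m := by
        rw [hm, ← two_mul]; exact ell_double
      have hmono : Nat.log 2 m ≤ Nat.log 2 g := Nat.log_mono_right (by omega)
      omega
    · have hm1 : 0 < m := by omega
      have := ih m (by omega) hm1
      have hd : ell g ≤ ell m + 1 := by rw [hm]; exact ell_odd
      have hlog : Nat.log 2 m + 1 ≤ Nat.log 2 g := by
        have h1 : Nat.log 2 (m * 2) = Nat.log 2 m + 1 := Nat.log_mul_base (by norm_num) (by omega)
        have h2 : Nat.log 2 (m * 2) ≤ Nat.log 2 g := Nat.log_mono_right (by omega)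
        omega
      omega

lemma log_le_quarter (m : ℕ) : Nat.log 2 m ≤ m / 4 + 1 := by
  rcases Nat.eq_zero_or_pos m with rfl | hm
  · simp
  have hpow : m / 4 + 2 < 2 ^ (m / 4 + 2) := Nat.lt_two_pow_self (n := m / 4 + 2)
  have hm4 : m < 2 ^ (m / 4 + 2) := by
    have : 4 * (2 ^ (m / 4)) ≥ 4 * (m / 4 + 1) := by
      have := Nat.lt_two_pow_self (n := m / 4)
      omega
    have h42 : 2 ^ (m / 4 + 2) = 4 * 2 ^ (m / 4) := by ring
    omega
  have := Nat.log_lt_of_lt_pow (by omega : m ≠ 0) hm4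
  omega

theorem stmt16 (k : ℕ) (hk : 0 < k) :
    obj ((k + 1) / 2 + 1) ≥ obj ((k + 7) / 8 + 1) + k / 6 := by
  rcases Nat.lt_or_ge k 19 with hsmall | hlarge
  · have e2 : ell 2 ≤ 1 := ell_le_of_rep (k := 1) ![1] ![1]
      (by decide) (by decide)
    have e3 : ell 3 ≤ 1 := ell_le_of_rep (k := 1) ![3] ![0]
      (by decide) (by decide)
    have e4 : ell 4 ≤ 1 := ell_le_of_rep (k := 1) ![1] ![2]
      (by decide) (by decide)
    have e5 : ell 5 ≤ 2 := ell_le_of_rep (k := 2) ![1,1] ![0,2]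
      (by decide) (by decide)
    have e6 : ell 6 ≤ 1 := ell_le_of_rep (k := 1) ![3] ![1]
      (by decide) (by decide)
    have e7 : ell 7 ≤ 2 := ell_le_of_rep (k := 2) ![3,1] ![0,2]
      (by decide) (by decide)
    have e8 : ell 8 ≤ 1 := ell_le_of_rep (k := 1) ![1] ![3]
      (by decide) (by decide)
    have e9 : ell 9 ≤ 2 := ell_le_of_rep (k := 2) ![1,1] ![0,3]
      (by decide) (by decide)
    have e10 : ell 10 ≤ 2 := ell_le_of_rep (k := 2) ![1,1] ![1,3]
      (by decide) (by decide)
    have p2 : 1 ≤ ell 2 := ell_pos (by norm_num)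
    have p3 : 1 ≤ ell 3 := ell_pos (by norm_num)
    have p4 : 1 ≤ ell 4 := ell_pos (by norm_num)
    unfold obj
    interval_cases k <;> norm_num <;> omega
  · set m := (k + 1) / 2 + 1 with hm
    set n := (k + 7) / 8 + 1 with hn
    have hml : ell m ≤ Nat.log 2 m + 1 := ell_le_log m (by omega)
    have hq := log_le_quarter m
    have hnp : 1 ≤ ell n := ell_pos (by omega)
    unfold obj
    omega
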